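/- Suppose K is a totally symmetric tensor on the Lie algebra 𝔑 (with respect to the orthonormal basis {e_α}, K^γ_{αβ} is symmetric under all permutations of α,β,γ) satisfying the total symmetry of ∇̂K, i.e. (∇̂_{e_α}K)(e_β,e_γ) = (∇̂_{e_β}K)(e_α,e_γ) for all indices, where ∇̂ is the Levi-Civita connection of the Fisher metric. Then K_{(j,k)(l,m)}^{i} = 0 for all mean indices i and covariance indices (j,k),(l,m). -/

import Mathlib

open Matrix

noncomputable section

/-- The ambient space of (n+1)×(n+1) real matrices containing the Lie algebra 𝔑 of
Aff^s(n,ℝ). -/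
abbrev Mat (n : ℕ) := Matrix (Fin (n + 1)) (Fin (n + 1)) ℝ

/-- The mean-direction basis vector e_i: 1 in entry (i, n+1), 0 otherwise. -/
def eMean {n : ℕ} (i : Fin n) : Mat n :=
  Matrix.single i.castSucc (Fin.last n) 1

/-- The covariance-direction basis vector e_{ij} (i<j): 1 in entry (i,j);
e_{ii}: 1/√2 in entry (i,i). -/
def eCov {n : ℕ} (i j : Fin n) : Mat n :=
  Matrix.single i.castSucc j.castSucc
    (if i = j then (Real.sqrt 2)⁻¹ else 1)

/-- The upper-left n×n block of an element of 𝔑. -/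
def blk {n : ℕ} (X : Mat n) : Matrix (Fin n) (Fin n) ℝ :=
  Matrix.of fun i j => X i.castSucc j.castSucc

/-- The last column (mean part) of an element of 𝔑. -/
def mcol {n : ℕ} (X : Mat n) : Fin n → ℝ :=
  fun i => X i.castSucc (Fin.last n)

/-- The Fisher inner product on 𝔑: g((U,u),(V,v)) = tr(UV) + tr(UVᵀ) + uᵀv. -/
def gN {n : ℕ} (X Y : Mat n) : ℝ :=
  Matrix.trace (blk X * blk Y) + Matrix.trace (blk X * (blk Y)ᵀ) + mcol X ⬝ᵥ mcol Y

end

/-- The symmetric bilinear map U : 𝔑 × 𝔑 → 𝔑 determined by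
2g(U(X,Y),Z) = g([Z,X],Y) + g(X,[Z,Y]) for all Z, written out in the orthonormal
basis {e_i} ∪ {e_{ij} : i ≤ j}. -/
noncomputable def Umap {n : ℕ} (X Y : Mat n) : Mat n :=
  (∑ i : Fin n, ((gN ⁅eMean i, X⁆ Y + gN X ⁅eMean i, Y⁆) / 2) • eMean i)
  + ∑ i : Fin n, ∑ j : Fin n,
      (if i ≤ j then ((gN ⁅eCov i j, X⁆ Y + gN X ⁅eCov i j, Y⁆) / 2) • eCov i j
       else 0)

/-- The left-invariant Levi-Civita connection of the Fisher metric: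
∇̂_X Y = (1/2)[X,Y] + U(X,Y). -/
noncomputable def nabla {n : ℕ} (X Y : Mat n) : Mat n :=
  (1 / 2 : ℝ) • ⁅X, Y⁆ + Umap X Y

/-- The index set I = {i} ∪ {(i,j) : i ≤ j} of the orthonormal basis of 𝔑. -/
def Idx (n : ℕ) := Fin n ⊕ {p : Fin n × Fin n // p.1 ≤ p.2}

/-- The orthonormal basis of 𝔑 indexed by I. -/
noncomputable def EB {n : ℕ} : Idx n → Mat n :=
  Sum.elim (fun i => eMean i) (fun p => eCov p.val.1 p.val.2)

attribute [local instance] LieRing.ofAssociativeRing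

section Aux

variable {n : ℕ}

lemma std_mul_std {N : Type*} [DecidableEq N] [Fintype N] (a b c d : N) (x y : ℝ) :
    Matrix.single a b x * Matrix.single c d y
      = if b = c then Matrix.single a d (x * y) else 0 := by
  split
  · next h => subst h; simp
  · next h => exact Matrix.single_mul_single_of_ne x a b _ h y

lemma std_transpose {N : Type*} [DecidableEq N] (a b : N) (x : ℝ) :
    (Matrix.single a b x)ᵀ = Matrix.single b a x := by
  ext i j
  simp [Matrix.single, Matrix.transpose_apply, and_comm]

lemma trace_std {N : Type*} [DecidableEq N] [Fintype N] (a b : N) (x : ℝ) :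
    Matrix.trace (Matrix.single a b x) = if a = b then x else 0 := by
  classical
  by_cases h : a = b
  · subst h
    simp [Matrix.trace, Matrix.diag, Matrix.single, Finset.sum_ite_eq]
  · simp only [Matrix.trace, Matrix.diag, Matrix.single, of_apply, if_neg h]
    refine Finset.sum_eq_zero fun i _ => ?_
    simp only [ite_eq_right_iff, and_imp]
    rintro rfl rfl; exact absurd rfl h

lemma blk_std (p q : Fin n) (r : ℝ) :
    blk (Matrix.single p.castSucc q.castSucc r) = Matrix.single p q r := by
  ext i j
  simp [blk, Matrix.single, Fin.castSucc_inj]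

lemma mcol_std (p q : Fin n) (r : ℝ) :
    mcol (Matrix.single p.castSucc q.castSucc r) = 0 := by
  funext i
  simp [mcol, Matrix.single, (Fin.castSucc_lt_last q).ne]

lemma blk_std_mean (p : Fin n) (r : ℝ) :
    blk (Matrix.single p.castSucc (Fin.last n) r) = 0 := by
  ext i j
  simp [blk, Matrix.single, (Fin.castSucc_lt_last j).ne']

lemma mcol_std_mean (p : Fin n) (r : ℝ) :
    mcol (Matrix.single p.castSucc (Fin.last n) r) = fun t => if p = t then r else 0 := by
  funext t
  simp [mcol, Matrix.single, Fin.castSucc_inj]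

lemma blk_eMean (i : Fin n) : blk (eMean i) = 0 := blk_std_mean i 1
lemma mcol_eMean (i : Fin n) : mcol (eMean i) = fun t => if i = t then 1 else 0 :=
  mcol_std_mean i 1
lemma blk_eCov (i j : Fin n) :
    blk (eCov i j) = Matrix.single i j (if i = j then (Real.sqrt 2)⁻¹ else 1) :=
  blk_std i j _
lemma mcol_eCov (i j : Fin n) : mcol (eCov i j) = 0 := mcol_std i j _

end Aux

section GNlin

variable {n : ℕ} (X X' Y Y' : Mat n)

lemma blk_add : blk (X + Y) = blk X + blk Y := rfl
lemma blk_smul (r : ℝ) : blk (r • X) = r • blk X := rfl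
lemma blk_zero : blk (0 : Mat n) = 0 := rfl
lemma mcol_add : mcol (X + Y) = mcol X + mcol Y := rfl
lemma mcol_smul (r : ℝ) : mcol (r • X) = r • mcol X := rfl
lemma mcol_zero : mcol (0 : Mat n) = 0 := rfl

lemma gN_add_left : gN (X + X') Y = gN X Y + gN X' Y := by
  simp only [gN, blk_add, mcol_add, Matrix.add_mul, Matrix.trace_add, add_dotProduct]
  ring

lemma gN_add_right : gN X (Y + Y') = gN X Y + gN X Y' := by
  simp only [gN, blk_add, mcol_add, Matrix.mul_add, Matrix.trace_add, dotProduct_add,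
    Matrix.transpose_add]
  ring

lemma gN_smul_left (r : ℝ) : gN (r • X) Y = r * gN X Y := by
  simp only [gN, blk_smul, mcol_smul, Matrix.smul_mul, Matrix.trace_smul, smul_dotProduct,
    smul_eq_mul]
  ring

lemma gN_smul_right (r : ℝ) : gN X (r • Y) = r * gN X Y := by
  simp only [gN, blk_smul, mcol_smul, Matrix.mul_smul, Matrix.trace_smul, dotProduct_smul,
    Matrix.transpose_smul, smul_eq_mul]
  ring

lemma gN_zero_left : gN (0 : Mat n) Y = 0 := by simp [gN, blk_zero, mcol_zero]
lemma gN_zero_right : gN X (0 : Mat n) = 0 := by simp [gN, blk_zero, mcol_zero]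

lemma gN_neg_left : gN (-X) Y = - gN X Y := by
  rw [show -X = (-1 : ℝ) • X by module, gN_smul_left]; ring
lemma gN_neg_right : gN X (-Y) = - gN X Y := by
  rw [show -Y = (-1 : ℝ) • Y by module, gN_smul_right]; ring

lemma gN_sub_left : gN (X - X') Y = gN X Y - gN X' Y := by
  rw [sub_eq_add_neg, gN_add_left, gN_neg_left]; ring

lemma gN_comm : gN X Y = gN Y X := by
  have h2 : Matrix.trace (blk X * (blk Y)ᵀ) = Matrix.trace (blk Y * (blk X)ᵀ) := by
    rw [← Matrix.trace_transpose, Matrix.transpose_mul, Matrix.transpose_transpose,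
      Matrix.trace_mul_comm]
  rw [gN, gN, Matrix.trace_mul_comm (blk X) (blk Y), h2, dotProduct_comm]

lemma gN_sum_left {ι : Type*} (s : Finset ι) (f : ι → Mat n) :
    gN (∑ i ∈ s, f i) Y = ∑ i ∈ s, gN (f i) Y := by
  classical
  induction s using Finset.induction_on with
  | empty => simp [gN_zero_left]
  | insert a s h ih => rw [Finset.sum_insert h, Finset.sum_insert h, gN_add_left, ih]

lemma gN_sum_right {ι : Type*} (s : Finset ι) (f : ι → Mat n) :
    gN X (∑ i ∈ s, f i) = ∑ i ∈ s, gN X (f i) := by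
  classical
  induction s using Finset.induction_on with
  | empty => simp [gN_zero_right]
  | insert a s h ih => rw [Finset.sum_insert h, Finset.sum_insert h, gN_add_right, ih]

lemma gN_of_blk_left (h : blk X = 0) (h' : mcol Y = 0) : gN X Y = 0 := by
  simp [gN, h, h']
lemma gN_of_blk_right (h : mcol X = 0) (h' : blk Y = 0) : gN X Y = 0 := by
  simp [gN, h, h']

end GNlin

section Ortho

variable {n : ℕ}

lemma gN_std_cov (a b p q : Fin n) (x y : ℝ) :
    gN (Matrix.single a.castSucc b.castSucc x) (Matrix.single p.castSucc q.castSucc y)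
      = (if b = p ∧ a = q then x * y else 0) + (if b = q ∧ a = p then x * y else 0) := by
  rw [gN, blk_std, blk_std, mcol_std, mcol_std, std_transpose, std_mul_std, std_mul_std]
  simp only [dotProduct, Pi.zero_apply, mul_zero, Finset.sum_const_zero, add_zero,
    apply_ite (Matrix.trace), trace_std, Matrix.trace_zero]
  by_cases h1 : b = p <;> by_cases h2 : a = q <;> by_cases h3 : b = q <;>
    by_cases h4 : a = p <;> simp [h1, h2, h3, h4, ite_and]

lemma gN_mm (i j : Fin n) : gN (eMean i) (eMean j) = if i = j then 1 else 0 := by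
  rw [gN, blk_eMean, mcol_eMean, mcol_eMean]
  simp only [Matrix.zero_mul, Matrix.trace_zero, zero_add, dotProduct]
  by_cases h : i = j
  · subst h; simp [Finset.sum_ite_eq]
  · rw [if_neg h]
    refine Finset.sum_eq_zero fun t _ => ?_
    by_cases h1 : i = t <;> by_cases h2 : j = t <;> simp_all

lemma gN_mc (i : Fin n) (p q : Fin n) : gN (eMean i) (eCov p q) = 0 :=
  gN_of_blk_left _ _ (blk_eMean i) (mcol_eCov p q)

lemma gN_cm (p q i : Fin n) : gN (eCov p q) (eMean i) = 0 :=
  gN_of_blk_right _ _ (mcol_eCov p q) (blk_eMean i)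

lemma sqrt2_facts : (Real.sqrt 2)⁻¹ * (Real.sqrt 2)⁻¹ = 2⁻¹ := by
  rw [← mul_inv]
  norm_num [Real.mul_self_sqrt]

lemma gN_cc {j k l m : Fin n} (hjk : j ≤ k) (hlm : l ≤ m) :
    gN (eCov j k) (eCov l m) = if j = l ∧ k = m then 1 else 0 := by
  rw [eCov, eCov, gN_std_cov]
  by_cases h1 : j = l ∧ k = m
  · obtain ⟨rfl, rfl⟩ := h1
    by_cases h : j = k
    · subst h; simp [sqrt2_facts]; norm_num
    · have : ¬ (k = j) := fun hh => h hh.symm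
      simp [h, this]
  · rw [if_neg h1]
    have h2 : ¬ (k = l ∧ j = m) := by
      rintro ⟨rfl, rfl⟩
      exact h1 ⟨le_antisymm hjk hlm, le_antisymm hlm hjk⟩
    have h3 : ¬ (k = m ∧ j = l) := fun ⟨h, h'⟩ => h1 ⟨h', h⟩
    rw [if_neg h2, if_neg h3, add_zero]

end Ortho

section Mul

variable {n : ℕ}

/-- coefficient of eCov -/
noncomputable def cf (j k : Fin n) : ℝ := if j = k then (Real.sqrt 2)⁻¹ else 1

lemma eCov_eq (j k : Fin n) : eCov j k = Matrix.single j.castSucc k.castSucc (cf j k) := rfl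

lemma cf_ne_zero (j k : Fin n) : cf j k ≠ 0 := by
  unfold cf; split
  · simp [Real.sqrt_eq_zero']
  · norm_num

lemma mul_em_em (i j : Fin n) : eMean i * eMean j = 0 := by
  rw [eMean, eMean, std_mul_std, if_neg (Fin.castSucc_lt_last j).ne']

lemma mul_c_m (p q i : Fin n) :
    eCov p q * eMean i = if q = i then cf p q • eMean p else 0 := by
  rw [eCov_eq, eMean, std_mul_std]
  simp only [Fin.castSucc_inj, mul_one, eMean, smul_single, smul_eq_mul]

lemma mul_m_c (i p q : Fin n) : eMean i * eCov p q = 0 := by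
  rw [eCov_eq, eMean, std_mul_std, if_neg (Fin.castSucc_lt_last p).ne']

lemma mul_c_c (p q l m : Fin n) :
    eCov p q * eCov l m
      = if q = l then (cf p q * cf l m) • Matrix.single p.castSucc m.castSucc (1:ℝ) else 0 := by
  rw [eCov_eq, eCov_eq, std_mul_std]
  simp only [Fin.castSucc_inj, smul_single, smul_eq_mul, mul_one]

lemma br_mm (i j : Fin n) : ⁅eMean i, eMean j⁆ = 0 := by
  rw [Ring.lie_def, mul_em_em, mul_em_em, sub_self]

lemma br_cm (p q i : Fin n) :
    ⁅eCov p q, eMean i⁆ = if q = i then cf p q • eMean p else 0 := by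
  rw [Ring.lie_def, mul_c_m, mul_m_c, sub_zero]

lemma br_mc (i p q : Fin n) :
    ⁅eMean i, eCov p q⁆ = -(if q = i then cf p q • eMean p else 0) := by
  rw [Ring.lie_def, mul_c_m, mul_m_c, zero_sub]

end Mul

noncomputable def d0 (n : ℕ) : Mat n := ∑ k : Fin n, ((Real.sqrt 2)⁻¹ : ℝ) • eCov k k

section D0

variable {n : ℕ}

lemma mcol_sum {ι : Type*} (s : Finset ι) (f : ι → Mat n) :
    mcol (∑ i ∈ s, f i) = ∑ i ∈ s, mcol (f i) := by
  classical
  induction s using Finset.induction_on with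
  | empty => exact mcol_zero
  | insert a s h ih => rw [Finset.sum_insert h, Finset.sum_insert h, mcol_add, ih]

lemma mcol_d0 : mcol (d0 n) = 0 := by
  rw [d0, mcol_sum]
  refine Finset.sum_eq_zero fun k _ => ?_
  rw [mcol_smul, mcol_eCov, smul_zero]

lemma mul_m_d0 (i : Fin n) : eMean i * d0 n = 0 := by
  rw [d0, Finset.mul_sum]
  refine Finset.sum_eq_zero fun k _ => ?_
  rw [mul_smul_comm, mul_m_c, smul_zero]

lemma mul_d0_m (i : Fin n) : d0 n * eMean i = (2⁻¹ : ℝ) • eMean i := by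
  rw [d0, Finset.sum_mul]
  have h : ∀ k : Fin n, ((Real.sqrt 2)⁻¹ : ℝ) • eCov k k * eMean i
      = if k = i then (2⁻¹ : ℝ) • eMean k else 0 := by
    intro k
    rw [Matrix.smul_mul, mul_c_m]
    split
    · rw [smul_smul]
      congr 1
      rw [cf, if_pos rfl, sqrt2_facts]
    · rw [smul_zero]
  rw [Finset.sum_congr rfl fun k _ => h k, Finset.sum_ite_eq', if_pos (Finset.mem_univ i)]

lemma cf_diag (k : Fin n) : cf k k = (Real.sqrt 2)⁻¹ := if_pos rfl

lemma mul_c_d0 (p q : Fin n) : eCov p q * d0 n = (2⁻¹ : ℝ) • eCov p q := by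
  rw [d0, Finset.mul_sum]
  have h : ∀ k : Fin n, eCov p q * (((Real.sqrt 2)⁻¹ : ℝ) • eCov k k)
      = if k = q then (2⁻¹ : ℝ) • eCov p q else 0 := by
    intro k
    rw [mul_smul_comm, mul_c_c]
    by_cases hk : q = k
    · rw [if_pos hk, ← hk, if_pos rfl, cf_diag, eCov_eq, smul_smul, smul_single,
        smul_single, smul_eq_mul, smul_eq_mul, mul_one]
      exact congrArg (Matrix.single _ _) (by linear_combination (cf p q) * sqrt2_facts)
    · rw [if_neg hk, smul_zero, if_neg (fun h : k = q => hk h.symm)]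
  rw [Finset.sum_congr rfl fun k _ => h k, Finset.sum_ite_eq', if_pos (Finset.mem_univ q)]

lemma mul_d0_c (p q : Fin n) : d0 n * eCov p q = (2⁻¹ : ℝ) • eCov p q := by
  rw [d0, Finset.sum_mul]
  have h : ∀ k : Fin n, (((Real.sqrt 2)⁻¹ : ℝ) • eCov k k) * eCov p q
      = if k = p then (2⁻¹ : ℝ) • eCov p q else 0 := by
    intro k
    rw [Matrix.smul_mul, mul_c_c]
    by_cases hk : k = p
    · rw [if_pos hk, hk, if_pos rfl, cf_diag, eCov_eq, smul_smul, smul_single,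
        smul_single, smul_eq_mul, smul_eq_mul, mul_one]
      exact congrArg (Matrix.single _ _) (by linear_combination (cf p q) * sqrt2_facts)
    · rw [if_neg hk, smul_zero, if_neg hk]
  rw [Finset.sum_congr rfl fun k _ => h k, Finset.sum_ite_eq', if_pos (Finset.mem_univ p)]

lemma br_m_d0 (i : Fin n) : ⁅eMean i, d0 n⁆ = -((2⁻¹ : ℝ) • eMean i) := by
  rw [Ring.lie_def, mul_m_d0, mul_d0_m, zero_sub]

lemma br_c_d0 (p q : Fin n) : ⁅eCov p q, d0 n⁆ = 0 := by
  rw [Ring.lie_def, mul_c_d0, mul_d0_c, sub_self]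

lemma gN_std_d0 (a b : Fin n) (r : ℝ) :
    gN (Matrix.single a.castSucc b.castSucc r) (d0 n) = if a = b then r else 0 := by
  rw [d0, gN_sum_right]
  have h : ∀ k : Fin n,
      gN (Matrix.single a.castSucc b.castSucc r) (((Real.sqrt 2)⁻¹ : ℝ) • eCov k k)
        = if k = a ∧ a = b then r else 0 := by
    intro k
    rw [gN_smul_right, eCov_eq, cf_diag, gN_std_cov]
    by_cases hab : b = k ∧ a = k
    · obtain ⟨hb, ha⟩ := hab
      rw [if_pos ⟨hb, ha⟩, if_pos ⟨ha.symm, ha.trans hb.symm⟩]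
      linear_combination (2 * r) * sqrt2_facts
    · rw [if_neg hab, if_neg (fun h : k = a ∧ a = b => hab ⟨h.2.symm.trans h.1.symm, h.1.symm⟩)]
      simp
  rw [Finset.sum_congr rfl fun k _ => h k]
  by_cases hab : a = b
  · simp [hab, Finset.sum_ite_eq']
  · simp [hab]

end D0


section UmapLemmas

variable {n : ℕ}

lemma gN_Umap_mean (X Y : Mat n) (t : Fin n) :
    gN (Umap X Y) (eMean t) = (gN ⁅eMean t, X⁆ Y + gN X ⁅eMean t, Y⁆) / 2 := by
  have hcov : ∀ i j : Fin n,
      gN (if i ≤ j then ((gN ⁅eCov i j, X⁆ Y + gN X ⁅eCov i j, Y⁆) / 2) • eCov i j else 0)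
        (eMean t) = 0 := by
    intro i j
    split
    · rw [gN_smul_left, gN_cm, mul_zero]
    · exact gN_zero_left _
  have hmean : ∀ i : Fin n,
      gN (((gN ⁅eMean i, X⁆ Y + gN X ⁅eMean i, Y⁆) / 2) • eMean i) (eMean t)
        = if i = t then (gN ⁅eMean t, X⁆ Y + gN X ⁅eMean t, Y⁆) / 2 else 0 := by
    intro i
    rw [gN_smul_left, gN_mm]
    by_cases h : i = t
    · subst h; simp
    · simp [h]
  rw [Umap, gN_add_left, gN_sum_left, gN_sum_left,
    Finset.sum_congr rfl fun i _ => hmean i,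
    Finset.sum_ite_eq', if_pos (Finset.mem_univ t)]
  have : ∀ i : Fin n,
      gN (∑ j : Fin n,
        (if i ≤ j then ((gN ⁅eCov i j, X⁆ Y + gN X ⁅eCov i j, Y⁆) / 2) • eCov i j else 0))
        (eMean t) = 0 := by
    intro i
    rw [gN_sum_left]
    exact Finset.sum_eq_zero fun j _ => hcov i j
  rw [Finset.sum_congr rfl fun i _ => this i, Finset.sum_const_zero, add_zero]

lemma gN_Umap_cov (X Y : Mat n) {p q : Fin n} (hpq : p ≤ q) :
    gN (Umap X Y) (eCov p q) = (gN ⁅eCov p q, X⁆ Y + gN X ⁅eCov p q, Y⁆) / 2 := by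
  have hmean : ∀ i : Fin n,
      gN (((gN ⁅eMean i, X⁆ Y + gN X ⁅eMean i, Y⁆) / 2) • eMean i) (eCov p q) = 0 := by
    intro i
    rw [gN_smul_left, gN_mc, mul_zero]
  have hcov : ∀ i j : Fin n,
      gN (if i ≤ j then ((gN ⁅eCov i j, X⁆ Y + gN X ⁅eCov i j, Y⁆) / 2) • eCov i j else 0)
        (eCov p q)
      = if i = p ∧ j = q then (gN ⁅eCov p q, X⁆ Y + gN X ⁅eCov p q, Y⁆) / 2 else 0 := by
    intro i j
    by_cases hip : i = p ∧ j = q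
    · obtain ⟨rfl, rfl⟩ := hip
      rw [if_pos hpq, gN_smul_left, gN_cc hpq hpq, if_pos ⟨rfl, rfl⟩, mul_one, if_pos ⟨rfl, rfl⟩]
    · rw [if_neg hip]
      split
      · next hij =>
        rw [gN_smul_left, gN_cc hij hpq, if_neg hip, mul_zero]
      · exact gN_zero_left _
  rw [Umap, gN_add_left, gN_sum_left, gN_sum_left,
    Finset.sum_congr rfl fun i _ => hmean i, Finset.sum_const_zero, zero_add]
  have hinner : ∀ i : Fin n,
      gN (∑ j : Fin n,
        (if i ≤ j then ((gN ⁅eCov i j, X⁆ Y + gN X ⁅eCov i j, Y⁆) / 2) • eCov i j else 0))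
        (eCov p q)
      = if i = p then (gN ⁅eCov p q, X⁆ Y + gN X ⁅eCov p q, Y⁆) / 2 else 0 := by
    intro i
    rw [gN_sum_left, Finset.sum_congr rfl fun j _ => hcov i j]
    by_cases hip : i = p
    · subst hip
      simp [Finset.sum_ite_eq']
    · simp [hip]
  rw [Finset.sum_congr rfl fun i _ => hinner i, Finset.sum_ite_eq', if_pos (Finset.mem_univ p)]

end UmapLemmas

section SpanStuff

variable {n : ℕ}

noncomputable abbrev SpanN (n : ℕ) : Submodule ℝ (Mat n) :=
  Submodule.span ℝ (Set.range (EB (n := n)))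

noncomputable abbrev SpanC (n : ℕ) : Submodule ℝ (Mat n) :=
  Submodule.span ℝ (Set.range fun p : {p : Fin n × Fin n // p.1 ≤ p.2} => eCov p.val.1 p.val.2)

noncomputable abbrev SpanM (n : ℕ) : Submodule ℝ (Mat n) :=
  Submodule.span ℝ (Set.range fun i : Fin n => eMean i)

lemma eMean_mem_S (i : Fin n) : eMean i ∈ SpanN n :=
  Submodule.subset_span ⟨Sum.inl i, rfl⟩

lemma eCov_mem_S {j k : Fin n} (h : j ≤ k) : eCov j k ∈ SpanN n :=
  Submodule.subset_span ⟨Sum.inr ⟨(j, k), h⟩, rfl⟩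

lemma eMean_mem_M (i : Fin n) : eMean i ∈ SpanM n :=
  Submodule.subset_span ⟨i, rfl⟩

lemma eCov_mem_C {j k : Fin n} (h : j ≤ k) : eCov j k ∈ SpanC n :=
  Submodule.subset_span ⟨⟨(j, k), h⟩, rfl⟩

lemma SpanM_le : SpanM n ≤ SpanN n := by
  rw [Submodule.span_le]
  rintro x ⟨i, rfl⟩
  exact eMean_mem_S i

lemma SpanC_le : SpanC n ≤ SpanN n := by
  rw [Submodule.span_le]
  rintro x ⟨p, rfl⟩
  exact eCov_mem_S p.prop

lemma d0_mem_C : d0 n ∈ SpanC n :=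
  Submodule.sum_mem _ fun k _ => Submodule.smul_mem _ _ (eCov_mem_C le_rfl)

lemma d0_mem_S : d0 n ∈ SpanN n := SpanC_le d0_mem_C

lemma gN_Umap_span (X Y Z : Mat n) (hZ : Z ∈ SpanN n) :
    gN (Umap X Y) Z = (gN ⁅Z, X⁆ Y + gN X ⁅Z, Y⁆) / 2 := by
  induction hZ using Submodule.span_induction with
  | mem z hz =>
    obtain ⟨a, rfl⟩ := hz
    cases a with
    | inl i => exact gN_Umap_mean X Y i
    | inr p => exact gN_Umap_cov X Y p.prop
  | zero => simp [gN_zero_right, gN_zero_left]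
  | add x y hx hy ihx ihy =>
    rw [gN_add_right, ihx, ihy, add_lie, add_lie, gN_add_left, gN_add_right]
    ring
  | smul r x hx ih =>
    rw [gN_smul_right, ih, smul_lie, smul_lie, gN_smul_left, gN_smul_right]
    ring

lemma gN_nabla_skew (X Z W : Mat n) (hZ : Z ∈ SpanN n) (hW : W ∈ SpanN n) :
    gN (nabla X Z) W + gN Z (nabla X W) = 0 := by
  rw [nabla, nabla, gN_add_left, gN_add_right, gN_smul_left, gN_smul_right,
    gN_Umap_span X Z W hW, gN_comm Z (Umap X W), gN_Umap_span X W Z hZ]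
  have e1 : ⁅W, X⁆ = -⁅X, W⁆ := by rw [← lie_skew]
  have e2 : ⁅Z, X⁆ = -⁅X, Z⁆ := by rw [← lie_skew]
  have e3 : ⁅Z, W⁆ = -⁅W, Z⁆ := by rw [← lie_skew]
  rw [e1, e2, e3, gN_neg_left, gN_neg_left, gN_neg_right, gN_comm Z ⁅X, W⁆]
  ring

end SpanStuff

section UmapLin

variable {n : ℕ}

lemma Umap_comm (X Y : Mat n) : Umap X Y = Umap Y X := by
  rw [Umap, Umap]
  refine congrArg₂ (· + ·) ?_ ?_
  · refine Finset.sum_congr rfl fun i _ => ?_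
    refine congrArg (· • eMean i) ?_
    rw [gN_comm ⁅eMean i, X⁆ Y, gN_comm X ⁅eMean i, Y⁆]
    ring
  · refine Finset.sum_congr rfl fun i _ => Finset.sum_congr rfl fun j _ => ?_
    split
    · refine congrArg (· • eCov i j) ?_
      rw [gN_comm ⁅eCov i j, X⁆ Y, gN_comm X ⁅eCov i j, Y⁆]
      ring
    · rfl

lemma Umap_add_left (X X' Y : Mat n) : Umap (X + X') Y = Umap X Y + Umap X' Y := by
  rw [Umap, Umap, Umap]
  have hm : ∀ i : Fin n,
      ((gN ⁅eMean i, X + X'⁆ Y + gN (X + X') ⁅eMean i, Y⁆) / 2) • eMean i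
        = ((gN ⁅eMean i, X⁆ Y + gN X ⁅eMean i, Y⁆) / 2) • eMean i
          + ((gN ⁅eMean i, X'⁆ Y + gN X' ⁅eMean i, Y⁆) / 2) • eMean i := by
    intro i
    rw [lie_add, gN_add_left, gN_add_left, ← add_smul]
    exact congrArg (· • eMean i) (by ring)
  have hc : ∀ i j : Fin n,
      (if i ≤ j then ((gN ⁅eCov i j, X + X'⁆ Y + gN (X + X') ⁅eCov i j, Y⁆) / 2) • eCov i j
        else 0)
      = (if i ≤ j then ((gN ⁅eCov i j, X⁆ Y + gN X ⁅eCov i j, Y⁆) / 2) • eCov i j else 0)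
        + (if i ≤ j then ((gN ⁅eCov i j, X'⁆ Y + gN X' ⁅eCov i j, Y⁆) / 2) • eCov i j
          else 0) := by
    intro i j
    split
    · rw [lie_add, gN_add_left, gN_add_left, ← add_smul]
      exact congrArg (· • eCov i j) (by ring)
    · rw [add_zero]
  rw [Finset.sum_congr rfl fun i _ => hm i, Finset.sum_add_distrib,
    Finset.sum_congr rfl fun i _ => Finset.sum_congr rfl fun j _ => hc i j,
    Finset.sum_congr rfl fun i (_ : i ∈ Finset.univ) => Finset.sum_add_distrib,
    Finset.sum_add_distrib]
  abel

end UmapLin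

section UmapLin2

variable {n : ℕ}

lemma U_root_.map_smul_left (r : ℝ) (X Y : Mat n) : Umap (r • X) Y = r • Umap X Y := by
  rw [Umap, Umap, smul_add, Finset.smul_sum, Finset.smul_sum]
  refine congrArg₂ (· + ·) ?_ ?_
  · refine Finset.sum_congr rfl fun i _ => ?_
    rw [lie_smul, gN_smul_left, gN_smul_left, smul_smul]
    exact congrArg (· • eMean i) (by ring)
  · refine Finset.sum_congr rfl fun i _ => ?_
    rw [Finset.smul_sum]
    refine Finset.sum_congr rfl fun j _ => ?_
    split
    · rw [lie_smul, gN_smul_left, gN_smul_left, smul_smul]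
      exact congrArg (· • eCov i j) (by ring)
    · rw [smul_zero]

lemma Umap_add_right (X Y Y' : Mat n) : Umap X (Y + Y') = Umap X Y + Umap X Y' := by
  rw [Umap_comm, Umap_add_left, Umap_comm Y X, Umap_comm Y' X]

lemma U_root_.map_smul_right (r : ℝ) (X Y : Mat n) : Umap X (r • Y) = r • Umap X Y := by
  rw [Umap_comm, U_root_.map_smul_left, Umap_comm Y X]

lemma Umap_zero_left (Y : Mat n) : Umap 0 Y = 0 := by
  have := U_root_.map_smul_left (n := n) 0 0 Y
  simpa using this

lemma Umap_zero_right (X : Mat n) : Umap X 0 = 0 := by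
  rw [Umap_comm]; exact Umap_zero_left X

lemma nabla_add_left (X X' Y : Mat n) : nabla (X + X') Y = nabla X Y + nabla X' Y := by
  rw [nabla, nabla, nabla, add_lie, Umap_add_left, smul_add]
  abel

lemma nabla_add_right (X Y Y' : Mat n) : nabla X (Y + Y') = nabla X Y + nabla X Y' := by
  rw [nabla, nabla, nabla, lie_add, Umap_add_right, smul_add]
  abel

lemma nabla_smul_left (r : ℝ) (X Y : Mat n) : nabla (r • X) Y = r • nabla X Y := by
  rw [nabla, nabla, smul_lie, U_root_.map_smul_left, smul_add, smul_comm]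

lemma nabla_smul_right (r : ℝ) (X Y : Mat n) : nabla X (r • Y) = r • nabla X Y := by
  rw [nabla, nabla, lie_smul, U_root_.map_smul_right, smul_add, smul_comm]

lemma nabla_zero_left (Y : Mat n) : nabla 0 Y = 0 := by
  rw [nabla, zero_lie, smul_zero, Umap_zero_left, add_zero]

lemma nabla_zero_right (X : Mat n) : nabla X 0 = 0 := by
  rw [nabla, lie_zero, smul_zero, Umap_zero_right, add_zero]

end UmapLin2

section Values

variable {n : ℕ}

lemma mcol_sub (X Y : Mat n) : mcol (X - Y) = mcol X - mcol Y := rfl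
lemma mcol_neg (X : Mat n) : mcol (-X) = - mcol X := rfl

lemma mcol_br_cc (p q j k : Fin n) : mcol ⁅eCov p q, eCov j k⁆ = 0 := by
  rw [Ring.lie_def, mcol_sub, mul_c_c, mul_c_c]
  have h : ∀ (a b c d : Fin n) (r : ℝ),
      mcol (if a = b then r • Matrix.single c.castSucc d.castSucc (1:ℝ) else 0) = 0 := by
    intro a b c d r
    split
    · rw [mcol_smul, mcol_std, smul_zero]
    · exact mcol_zero
  rw [h, h, sub_zero]

lemma Umap_m_d0 (i : Fin n) : Umap (eMean i) (d0 n) = -((4⁻¹ : ℝ) • eMean i) := by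
  rw [Umap]
  have hm : ∀ t : Fin n,
      ((gN ⁅eMean t, eMean i⁆ (d0 n) + gN (eMean i) ⁅eMean t, d0 n⁆) / 2) • eMean t
        = if t = i then -((4⁻¹ : ℝ) • eMean i) else 0 := by
    intro t
    rw [br_mm, gN_zero_left, br_m_d0, gN_neg_right, gN_smul_right, gN_mm]
    by_cases h : t = i
    · subst h
      rw [if_pos rfl, if_pos rfl, ← neg_smul]
      exact congrArg (· • eMean t) (by norm_num)
    · rw [if_neg (fun hh => h hh.symm), if_neg h]
      exact smul_eq_zero_of_left (by norm_num) _
  have hc : ∀ p q : Fin n,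
      (if p ≤ q then
        ((gN ⁅eCov p q, eMean i⁆ (d0 n) + gN (eMean i) ⁅eCov p q, d0 n⁆) / 2) • eCov p q
       else 0) = 0 := by
    intro p q
    split
    · rw [br_cm, br_c_d0, gN_zero_right]
      have h1 : gN (if q = i then cf p q • eMean p else 0) (d0 n) = 0 := by
        split
        · rw [gN_smul_left, gN_of_blk_left _ _ (blk_eMean p) mcol_d0, mul_zero]
        · exact gN_zero_left _
      rw [h1]
      norm_num
    · rfl
  rw [Finset.sum_congr rfl fun t _ => hm t, Finset.sum_ite_eq', if_pos (Finset.mem_univ i),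
    Finset.sum_congr rfl fun p _ => Finset.sum_congr rfl fun q _ => hc p q]
  simp

lemma Umap_d0_d0 : Umap (d0 n) (d0 n) = 0 := by
  rw [Umap]
  have hm : ∀ t : Fin n,
      ((gN ⁅eMean t, d0 n⁆ (d0 n) + gN (d0 n) ⁅eMean t, d0 n⁆) / 2) • eMean t = 0 := by
    intro t
    rw [br_m_d0, gN_neg_left, gN_smul_left, gN_neg_right, gN_smul_right,
      gN_of_blk_left _ _ (blk_eMean t) mcol_d0, gN_of_blk_right _ _ mcol_d0 (blk_eMean t)]
    norm_num
  have hc : ∀ p q : Fin n,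
      (if p ≤ q then
        ((gN ⁅eCov p q, d0 n⁆ (d0 n) + gN (d0 n) ⁅eCov p q, d0 n⁆) / 2) • eCov p q
       else 0) = 0 := by
    intro p q
    split
    · rw [br_c_d0, gN_zero_left, gN_zero_right]
      norm_num
    · rfl
  rw [Finset.sum_congr rfl fun t _ => hm t,
    Finset.sum_congr rfl fun p _ => Finset.sum_congr rfl fun q _ => hc p q]
  simp

lemma gN_mulcc_d0 (p q j k : Fin n) :
    gN (eCov p q * eCov j k) (d0 n) = if q = j ∧ p = k then cf p q * cf j k else 0 := by
  rw [mul_c_c]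
  by_cases h1 : q = j
  · rw [if_pos h1, gN_smul_left, gN_std_d0]
    by_cases h2 : p = k
    · rw [if_pos h2, if_pos ⟨h1, h2⟩, mul_one]
    · rw [if_neg h2, if_neg (fun hh => h2 hh.2), mul_zero]
  · rw [if_neg h1, if_neg (fun hh => h1 hh.1), gN_zero_left]

lemma gN_br_cc_d0 (p q j k : Fin n) : gN ⁅eCov p q, eCov j k⁆ (d0 n) = 0 := by
  rw [Ring.lie_def, gN_sub_left, gN_mulcc_d0, gN_mulcc_d0]
  by_cases h : q = j ∧ p = k
  · rw [if_pos h, if_pos ⟨h.2.symm, h.1.symm⟩]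
    ring
  · rw [if_neg h, if_neg (fun hh => h ⟨hh.2.symm, hh.1.symm⟩), sub_zero]

lemma Umap_c_d0 (j k : Fin n) : Umap (eCov j k) (d0 n) = 0 := by
  rw [Umap]
  have hm : ∀ t : Fin n,
      ((gN ⁅eMean t, eCov j k⁆ (d0 n) + gN (eCov j k) ⁅eMean t, d0 n⁆) / 2) • eMean t = 0 := by
    intro t
    rw [br_mc, br_m_d0, gN_neg_left, gN_neg_right, gN_smul_right,
      gN_of_blk_right _ _ (mcol_eCov j k) (blk_eMean t)]
    have h1 : gN (if k = t then cf j k • eMean j else 0) (d0 n) = 0 := by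
      split
      · rw [gN_smul_left, gN_of_blk_left _ _ (blk_eMean j) mcol_d0, mul_zero]
      · exact gN_zero_left _
    rw [h1]
    norm_num
  have hc : ∀ p q : Fin n,
      (if p ≤ q then
        ((gN ⁅eCov p q, eCov j k⁆ (d0 n) + gN (eCov j k) ⁅eCov p q, d0 n⁆) / 2) • eCov p q
       else 0) = 0 := by
    intro p q
    split
    · rw [gN_br_cc_d0, br_c_d0, gN_zero_right]
      norm_num
    · rfl
  rw [Finset.sum_congr rfl fun t _ => hm t,
    Finset.sum_congr rfl fun p _ => Finset.sum_congr rfl fun q _ => hc p q]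
  simp

lemma Umap_m_c (i j k : Fin n) :
    Umap (eMean i) (eCov j k) = if i = j then (-(cf j k / 2)) • eMean k else 0 := by
  rw [Umap]
  have hm : ∀ t : Fin n,
      ((gN ⁅eMean t, eMean i⁆ (eCov j k) + gN (eMean i) ⁅eMean t, eCov j k⁆) / 2) • eMean t
        = if t = k then (if i = j then (-(cf j k / 2)) • eMean k else 0) else 0 := by
    intro t
    rw [br_mm, gN_zero_left, br_mc, gN_neg_right]
    by_cases h1 : t = k
    · subst h1
      rw [if_pos rfl, if_pos rfl, gN_smul_right, gN_mm]
      by_cases h2 : i = j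
      · rw [if_pos h2, if_pos h2]
        exact congrArg (· • eMean t) (by ring)
      · rw [if_neg h2, if_neg h2]
        exact smul_eq_zero_of_left (by norm_num) _
    · rw [if_neg (fun hh => h1 hh.symm), if_neg h1, gN_zero_right]
      exact smul_eq_zero_of_left (by norm_num) _
  have hc : ∀ p q : Fin n,
      (if p ≤ q then
        ((gN ⁅eCov p q, eMean i⁆ (eCov j k) + gN (eMean i) ⁅eCov p q, eCov j k⁆) / 2) • eCov p q
       else 0) = 0 := by
    intro p q
    split
    · rw [gN_of_blk_left _ _ (blk_eMean i) (mcol_br_cc p q j k), br_cm]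
      have h1 : gN (if q = i then cf p q • eMean p else 0) (eCov j k) = 0 := by
        split
        · rw [gN_smul_left, gN_of_blk_left _ _ (blk_eMean p) (mcol_eCov j k), mul_zero]
        · exact gN_zero_left _
      rw [h1]
      norm_num
    · rfl
  rw [Finset.sum_congr rfl fun t _ => hm t, Finset.sum_ite_eq', if_pos (Finset.mem_univ k),
    Finset.sum_congr rfl fun p _ => Finset.sum_congr rfl fun q _ => hc p q]
  simp

end Values

section Members

variable {n : ℕ}

lemma std_cov_mem {j m : Fin n} (h : j ≤ m) :
    Matrix.single j.castSucc m.castSucc (1 : ℝ) ∈ SpanC n := by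
  have he : Matrix.single j.castSucc m.castSucc (1 : ℝ) = (cf j m)⁻¹ • eCov j m := by
    rw [eCov_eq, smul_single, smul_eq_mul, inv_mul_cancel₀ (cf_ne_zero j m)]
  rw [he]
  exact Submodule.smul_mem _ _ (eCov_mem_C h)

lemma br_cc_mem {j k l m : Fin n} (hjk : j ≤ k) (hlm : l ≤ m) :
    ⁅eCov j k, eCov l m⁆ ∈ SpanC n := by
  rw [Ring.lie_def, mul_c_c, mul_c_c]
  refine Submodule.sub_mem _ ?_ ?_
  · split
    · next h => exact Submodule.smul_mem _ _ (std_cov_mem (hjk.trans (h ▸ hlm)))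
    · exact Submodule.zero_mem _
  · split
    · next h => exact Submodule.smul_mem _ _ (std_cov_mem (hlm.trans (h ▸ hjk)))
    · exact Submodule.zero_mem _

lemma Umap_cc_mem (j k l m : Fin n) : Umap (eCov j k) (eCov l m) ∈ SpanC n := by
  rw [Umap]
  refine Submodule.add_mem _ ?_ ?_
  · have hm : ∀ t : Fin n,
        ((gN ⁅eMean t, eCov j k⁆ (eCov l m) + gN (eCov j k) ⁅eMean t, eCov l m⁆) / 2) • eMean t
          = 0 := by
      intro t
      rw [br_mc, br_mc, gN_neg_left, gN_neg_right]
      have h1 : gN (if k = t then cf j k • eMean j else 0) (eCov l m) = 0 := by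
        split
        · rw [gN_smul_left, gN_of_blk_left _ _ (blk_eMean j) (mcol_eCov l m), mul_zero]
        · exact gN_zero_left _
      have h2 : gN (eCov j k) (if m = t then cf l m • eMean l else 0) = 0 := by
        split
        · rw [gN_smul_right, gN_of_blk_right _ _ (mcol_eCov j k) (blk_eMean l), mul_zero]
        · exact gN_zero_right _
      rw [h1, h2]
      exact smul_eq_zero_of_left (by norm_num) _
    rw [Finset.sum_congr rfl fun t _ => hm t, Finset.sum_const_zero]
    exact Submodule.zero_mem _
  · refine Submodule.sum_mem _ fun p _ => Submodule.sum_mem _ fun q _ => ?_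
    split
    · next h => exact Submodule.smul_mem _ _ (eCov_mem_C h)
    · exact Submodule.zero_mem _

lemma nab_m_d0 (i : Fin n) : nabla (eMean i) (d0 n) = -((2⁻¹ : ℝ) • eMean i) := by
  rw [nabla, br_m_d0, Umap_m_d0]
  module

lemma br_d0_m (i : Fin n) : ⁅d0 n, eMean i⁆ = (2⁻¹ : ℝ) • eMean i := by
  rw [Ring.lie_def, mul_d0_m, mul_m_d0, sub_zero]

lemma nab_d0_m (i : Fin n) : nabla (d0 n) (eMean i) = 0 := by
  rw [nabla, br_d0_m, Umap_comm, Umap_m_d0]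
  module

lemma nab_d0_d0 : nabla (d0 n) (d0 n) = 0 := by
  rw [nabla, lie_self, Umap_d0_d0, smul_zero, add_zero]

lemma nab_c_d0 (j k : Fin n) : nabla (eCov j k) (d0 n) = 0 := by
  rw [nabla, br_c_d0, Umap_c_d0, smul_zero, add_zero]

lemma nab_m_c_mem (i j k : Fin n) : nabla (eMean i) (eCov j k) ∈ SpanM n := by
  rw [nabla, br_mc, Umap_m_c]
  refine Submodule.add_mem _ ?_ ?_
  · refine Submodule.smul_mem _ _ (Submodule.neg_mem _ ?_)
    split
    · exact Submodule.smul_mem _ _ (eMean_mem_M j)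
    · exact Submodule.zero_mem _
  · split
    · exact Submodule.smul_mem _ _ (eMean_mem_M k)
    · exact Submodule.zero_mem _

lemma nab_c_m_mem (j k i : Fin n) : nabla (eCov j k) (eMean i) ∈ SpanM n := by
  rw [nabla, br_cm, Umap_comm, Umap_m_c]
  refine Submodule.add_mem _ ?_ ?_
  · refine Submodule.smul_mem _ _ ?_
    split
    · exact Submodule.smul_mem _ _ (eMean_mem_M j)
    · exact Submodule.zero_mem _
  · split
    · exact Submodule.smul_mem _ _ (eMean_mem_M k)
    · exact Submodule.zero_mem _

lemma nab_cc_mem {j k l m : Fin n} (hjk : j ≤ k) (hlm : l ≤ m) :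
    nabla (eCov j k) (eCov l m) ∈ SpanC n :=
  Submodule.add_mem _ (Submodule.smul_mem _ _ (br_cc_mem hjk hlm)) (Umap_cc_mem j k l m)

end Members

section KStuff

variable {n : ℕ} (K : Mat n →ₗ[ℝ] Mat n →ₗ[ℝ] Mat n)

@[simp] lemma EB_inl (i : Fin n) : EB (Sum.inl i) = eMean i := rfl
@[simp] lemma EB_inr (p : {p : Fin n × Fin n // p.1 ≤ p.2}) :
    EB (Sum.inr p) = eCov p.val.1 p.val.2 := rfl

lemma hval_span (hval : ∀ a b : Idx n, K (EB a) (EB b) ∈ SpanN n) :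
    ∀ X Y : Mat n, X ∈ SpanN n → Y ∈ SpanN n → K X Y ∈ SpanN n := by
  have h1 : ∀ a : Idx n, ∀ Y ∈ SpanN n, K (EB a) Y ∈ SpanN n := by
    intro a Y hY
    induction hY using Submodule.span_induction with
    | mem y hy => obtain ⟨b, rfl⟩ := hy; exact hval a b
    | zero => rw [map_zero]; exact Submodule.zero_mem _
    | add x y hx hy ihx ihy => rw [map_add]; exact Submodule.add_mem _ ihx ihy
    | smul r x hx ih => rw [_root_.map_smul]; exact Submodule.smul_mem _ _ ih
  intro X Y hX hY
  induction hX using Submodule.span_induction with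
  | mem x hx => obtain ⟨a, rfl⟩ := hx; exact h1 a Y hY
  | zero => rw [map_zero, LinearMap.zero_apply]; exact Submodule.zero_mem _
  | add x y hx hy ihx ihy => rw [map_add, LinearMap.add_apply]; exact Submodule.add_mem _ ihx ihy
  | smul r x hx ih => rw [_root_.map_smul, LinearMap.smul_apply]; exact Submodule.smul_mem _ _ ih

lemma T12 (h : ∀ a b c : Idx n, gN (K (EB a) (EB b)) (EB c) = gN (K (EB b) (EB a)) (EB c)) :
    ∀ X Y Z : Mat n, X ∈ SpanN n → Y ∈ SpanN n → Z ∈ SpanN n →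
      gN (K X Y) Z = gN (K Y X) Z := by
  have h1 : ∀ a b : Idx n, ∀ Z ∈ SpanN n,
      gN (K (EB a) (EB b)) Z = gN (K (EB b) (EB a)) Z := by
    intro a b Z hZ
    induction hZ using Submodule.span_induction with
    | mem z hz => obtain ⟨c, rfl⟩ := hz; exact h a b c
    | zero => rw [gN_zero_right, gN_zero_right]
    | add x y hx hy ihx ihy => rw [gN_add_right, gN_add_right, ihx, ihy]
    | smul r x hx ih => rw [gN_smul_right, gN_smul_right, ih]
  have h2 : ∀ a : Idx n, ∀ Y, Y ∈ SpanN n → ∀ Z, Z ∈ SpanN n →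
      gN (K (EB a) Y) Z = gN (K Y (EB a)) Z := by
    intro a Y hY
    induction hY using Submodule.span_induction with
    | mem y hy => obtain ⟨b, rfl⟩ := hy; exact fun Z hZ => h1 a b Z hZ
    | zero => intro Z hZ; simp [gN_zero_left]
    | add x y hx hy ihx ihy =>
      intro Z hZ
      rw [map_add, map_add, LinearMap.add_apply, gN_add_left, gN_add_left,
        ihx Z hZ, ihy Z hZ]
    | smul r x hx ih =>
      intro Z hZ
      rw [_root_.map_smul, _root_.map_smul, LinearMap.smul_apply, gN_smul_left, gN_smul_left, ih Z hZ]
  intro X Y Z hX hY hZ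
  induction hX using Submodule.span_induction with
  | mem x hx => obtain ⟨a, rfl⟩ := hx; exact h2 a Y hY Z hZ
  | zero => simp [gN_zero_left]
  | add x y hx hy ihx ihy =>
    rw [map_add, map_add, LinearMap.add_apply, gN_add_left, gN_add_left, ihx, ihy]
  | smul r x hx ih =>
    rw [_root_.map_smul, _root_.map_smul, LinearMap.smul_apply, gN_smul_left, gN_smul_left, ih]

lemma T23 (h : ∀ a b c : Idx n, gN (K (EB a) (EB b)) (EB c) = gN (K (EB a) (EB c)) (EB b)) :
    ∀ X Y Z : Mat n, X ∈ SpanN n → Y ∈ SpanN n → Z ∈ SpanN n →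
      gN (K X Y) Z = gN (K X Z) Y := by
  have h1 : ∀ a b : Idx n, ∀ Z ∈ SpanN n,
      gN (K (EB a) (EB b)) Z = gN (K (EB a) Z) (EB b) := by
    intro a b Z hZ
    induction hZ using Submodule.span_induction with
    | mem z hz => obtain ⟨c, rfl⟩ := hz; exact h a b c
    | zero => simp [gN_zero_left, gN_zero_right]
    | add x y hx hy ihx ihy =>
      rw [gN_add_right, map_add, gN_add_left, ihx, ihy]
    | smul r x hx ih =>
      rw [gN_smul_right, _root_.map_smul, gN_smul_left, ih]
  have h2 : ∀ a : Idx n, ∀ Y, Y ∈ SpanN n → ∀ Z, Z ∈ SpanN n →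
      gN (K (EB a) Y) Z = gN (K (EB a) Z) Y := by
    intro a Y hY
    induction hY using Submodule.span_induction with
    | mem y hy => obtain ⟨b, rfl⟩ := hy; exact fun Z hZ => h1 a b Z hZ
    | zero => intro Z hZ; simp [gN_zero_left, gN_zero_right]
    | add x y hx hy ihx ihy =>
      intro Z hZ
      rw [map_add, gN_add_left, gN_add_right, ihx Z hZ, ihy Z hZ]
    | smul r x hx ih =>
      intro Z hZ
      rw [_root_.map_smul, gN_smul_left, gN_smul_right, ih Z hZ]
  intro X Y Z hX hY hZ
  induction hX using Submodule.span_induction with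
  | mem x hx => obtain ⟨a, rfl⟩ := hx; exact h2 a Y hY Z hZ
  | zero => simp [gN_zero_left]
  | add x y hx hy ihx ihy =>
    rw [map_add, LinearMap.add_apply, LinearMap.add_apply, gN_add_left, gN_add_left, ihx, ihy]
  | smul r x hx ih =>
    rw [_root_.map_smul, LinearMap.smul_apply, LinearMap.smul_apply, gN_smul_left, gN_smul_left, ih]

end KStuff

section HSsec

variable {n : ℕ} (K : Mat n →ₗ[ℝ] Mat n →ₗ[ℝ] Mat n)

lemma HS (hval : ∀ a b : Idx n, K (EB a) (EB b) ∈ SpanN n)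
    (hnabK : ∀ a b c : Idx n,
      nabla (EB a) (K (EB b) (EB c)) - K (nabla (EB a) (EB b)) (EB c)
          - K (EB b) (nabla (EB a) (EB c))
        = nabla (EB b) (K (EB a) (EB c)) - K (nabla (EB b) (EB a)) (EB c)
          - K (EB a) (nabla (EB b) (EB c))) :
    ∀ a : Idx n, ∀ Y Z W : Mat n, Y ∈ SpanN n → Z ∈ SpanN n → W ∈ SpanN n →
      gN (K Y Z) (nabla (EB a) W) + gN (K (nabla (EB a) Y) Z) W
          + gN (K Y (nabla (EB a) Z)) W
        = gN (K (EB a) Z) (nabla Y W) + gN (K (nabla Y (EB a)) Z) W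
          + gN (K (EB a) (nabla Y Z)) W := by
  intro a
  have base : ∀ b c : Idx n, ∀ W, W ∈ SpanN n →
      gN (K (EB b) (EB c)) (nabla (EB a) W) + gN (K (nabla (EB a) (EB b)) (EB c)) W
          + gN (K (EB b) (nabla (EB a) (EB c))) W
        = gN (K (EB a) (EB c)) (nabla (EB b) W) + gN (K (nabla (EB b) (EB a)) (EB c)) W
          + gN (K (EB a) (nabla (EB b) (EB c))) W := by
    intro b c W hW
    have h0 := congrArg (fun M => gN M W) (hnabK a b c)
    simp only [gN_sub_left] at h0
    have m1 := gN_nabla_skew (EB a) (K (EB b) (EB c)) W (hval b c) hW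
    have m2 := gN_nabla_skew (EB b) (K (EB a) (EB c)) W (hval a c) hW
    linarith
  have step2 : ∀ b : Idx n, ∀ Z, Z ∈ SpanN n → ∀ W, W ∈ SpanN n →
      gN (K (EB b) Z) (nabla (EB a) W) + gN (K (nabla (EB a) (EB b)) Z) W
          + gN (K (EB b) (nabla (EB a) Z)) W
        = gN (K (EB a) Z) (nabla (EB b) W) + gN (K (nabla (EB b) (EB a)) Z) W
          + gN (K (EB a) (nabla (EB b) Z)) W := by
    intro b Z hZ
    induction hZ using Submodule.span_induction with
    | mem z hz => obtain ⟨c, rfl⟩ := hz; exact base b c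
    | zero =>
      intro W hW
      simp [nabla_zero_right, gN_zero_left, gN_zero_right]
    | add x y hx hy ihx ihy =>
      intro W hW
      have e1 := ihx W hW
      have e2 := ihy W hW
      simp only [map_add, LinearMap.add_apply, nabla_add_right, gN_add_left, gN_add_right]
      linarith
    | smul r x hx ih =>
      intro W hW
      have e := ih W hW
      simp only [_root_.map_smul, LinearMap.smul_apply, nabla_smul_right, gN_smul_left,
        gN_smul_right]
      linear_combination r * e
  intro Y Z W hY hZ hW
  induction hY using Submodule.span_induction with
  | mem y hy => obtain ⟨b, rfl⟩ := hy; exact step2 b Z hZ W hW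
  | zero =>
    simp [nabla_zero_left, nabla_zero_right, gN_zero_left, gN_zero_right]
  | add x y hx hy ihx ihy =>
    simp only [map_add, LinearMap.add_apply, nabla_add_left, nabla_add_right, gN_add_left,
      gN_add_right]
    linarith
  | smul r x hx ih =>
    simp only [_root_.map_smul, LinearMap.smul_apply, nabla_smul_left, nabla_smul_right,
      gN_smul_left, gN_smul_right]
    linear_combination r * ih

end HSsec

/-- let K be a totally symmetric tensor on the Lie algebra 𝔑 (its
components K^γ_{αβ} = g(K(e_α,e_β),e_γ) with respect to the orthonormal basis are
symmetric under all permutations of α,β,γ and K takes values in 𝔑) such that ∇̂K is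
totally symmetric, i.e. (∇̂_{e_α}K)(e_β,e_γ) = (∇̂_{e_β}K)(e_α,e_γ) for all indices,
where ∇̂ is the Levi-Civita connection of the Fisher metric. Then
K^i_{(j,k)(l,m)} = 0 for every mean index i and covariance indices (j,k), (l,m). -/
theorem K_mean_cov_cov_vanishes (n : ℕ)
    (K : Mat n →ₗ[ℝ] Mat n →ₗ[ℝ] Mat n)
    (hval : ∀ a b : Idx n, K (EB a) (EB b) ∈ Submodule.span ℝ (Set.range (EB (n := n))))
    (hsymm1 : ∀ a b c : Idx n,
      gN (K (EB a) (EB b)) (EB c) = gN (K (EB b) (EB a)) (EB c))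
    (hsymm2 : ∀ a b c : Idx n,
      gN (K (EB a) (EB b)) (EB c) = gN (K (EB a) (EB c)) (EB b))
    (hnabK : ∀ a b c : Idx n,
      nabla (EB a) (K (EB b) (EB c)) - K (nabla (EB a) (EB b)) (EB c)
          - K (EB b) (nabla (EB a) (EB c))
        = nabla (EB b) (K (EB a) (EB c)) - K (nabla (EB b) (EB a)) (EB c)
          - K (EB a) (nabla (EB b) (EB c))) :
    ∀ i j k l m : Fin n, j ≤ k → l ≤ m →
      gN (K (eCov j k) (eCov l m)) (eMean i) = 0 := by
  intro i j k l m hjk hlm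
  have t12 := T12 K hsymm1
  have t23 := T23 K hsymm2
  have hs := HS K hval hnabK
  -- Step A
  have stepA0 : ∀ t : Fin n, gN (K (d0 n) (d0 n)) (eMean t) = 0 := by
    intro t
    have h := hs (Sum.inl t) (d0 n) (d0 n) (d0 n) d0_mem_S d0_mem_S d0_mem_S
    simp only [EB_inl] at h
    rw [nab_m_d0, nab_d0_d0, nab_d0_m] at h
    simp only [map_neg, _root_.map_smul, map_zero, LinearMap.neg_apply, LinearMap.smul_apply,
      LinearMap.zero_apply, gN_neg_left, gN_neg_right, gN_smul_left, gN_smul_right,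
      gN_zero_left, gN_zero_right] at h
    have s1 := t12 (eMean t) (d0 n) (d0 n) (eMean_mem_S t) d0_mem_S d0_mem_S
    have s2 := t23 (d0 n) (eMean t) (d0 n) d0_mem_S (eMean_mem_S t) d0_mem_S
    linarith
  have stepA : ∀ z ∈ SpanM n, gN (K (d0 n) (d0 n)) z = 0 := by
    intro z hz
    induction hz using Submodule.span_induction with
    | mem w hw => obtain ⟨t, rfl⟩ := hw; exact stepA0 t
    | zero => exact gN_zero_right _
    | add x y hx hy ihx ihy => rw [gN_add_right, ihx, ihy, add_zero]
    | smul r x hx ih => rw [gN_smul_right, ih, mul_zero]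
  -- Step B
  have stepB0 : ∀ p q : Fin n, p ≤ q → ∀ t : Fin n,
      gN (K (eCov p q) (d0 n)) (eMean t) = 0 := by
    intro p q hpq t
    have h := hs (Sum.inl t) (eCov p q) (d0 n) (d0 n) (eCov_mem_S hpq) d0_mem_S d0_mem_S
    simp only [EB_inl] at h
    rw [nab_m_d0, nab_c_d0] at h
    have hm1 : gN (K (nabla (eMean t) (eCov p q)) (d0 n)) (d0 n) = 0 := by
      have hmem := nab_m_c_mem t p q
      rw [t12 _ _ _ (SpanM_le hmem) d0_mem_S d0_mem_S,
        t23 _ _ _ d0_mem_S (SpanM_le hmem) d0_mem_S]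
      exact stepA _ hmem
    have hm2 : gN (K (nabla (eCov p q) (eMean t)) (d0 n)) (d0 n) = 0 := by
      have hmem := nab_c_m_mem p q t
      rw [t12 _ _ _ (SpanM_le hmem) d0_mem_S d0_mem_S,
        t23 _ _ _ d0_mem_S (SpanM_le hmem) d0_mem_S]
      exact stepA _ hmem
    simp only [map_neg, _root_.map_smul, map_zero, LinearMap.neg_apply, LinearMap.smul_apply,
      LinearMap.zero_apply, gN_neg_left, gN_neg_right, gN_smul_left, gN_smul_right,
      gN_zero_left, gN_zero_right] at h
    have s1 := t23 (eCov p q) (eMean t) (d0 n) (eCov_mem_S hpq) (eMean_mem_S t) d0_mem_S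
    linarith
  have stepB : ∀ y ∈ SpanC n, ∀ z ∈ SpanM n, gN (K y (d0 n)) z = 0 := by
    intro y hy
    induction hy using Submodule.span_induction with
    | mem w hw =>
      obtain ⟨p, rfl⟩ := hw
      intro z hz
      induction hz using Submodule.span_induction with
      | mem v hv => obtain ⟨t, rfl⟩ := hv; exact stepB0 p.val.1 p.val.2 p.prop t
      | zero => exact gN_zero_right _
      | add x y hx hy ihx ihy => rw [gN_add_right, ihx, ihy, add_zero]
      | smul r x hx ih => rw [gN_smul_right, ih, mul_zero]
    | zero => intro z hz; simp [gN_zero_left]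
    | add x y hx hy ihx ihy =>
      intro z hz
      rw [map_add, LinearMap.add_apply, gN_add_left, ihx z hz, ihy z hz, add_zero]
    | smul r x hx ih =>
      intro z hz
      rw [_root_.map_smul, LinearMap.smul_apply, gN_smul_left, ih z hz, mul_zero]
  -- Step C
  have h := hs (Sum.inl i) (eCov j k) (eCov l m) (d0 n) (eCov_mem_S hjk) (eCov_mem_S hlm)
    d0_mem_S
  simp only [EB_inl] at h
  rw [nab_m_d0, nab_c_d0] at h
  have e1 : gN (K (nabla (eMean i) (eCov j k)) (eCov l m)) (d0 n) = 0 := by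
    have hmem := nab_m_c_mem i j k
    rw [t12 _ _ _ (SpanM_le hmem) (eCov_mem_S hlm) d0_mem_S,
      t23 _ _ _ (eCov_mem_S hlm) (SpanM_le hmem) d0_mem_S]
    exact stepB _ (eCov_mem_C hlm) _ hmem
  have e2 : gN (K (eCov j k) (nabla (eMean i) (eCov l m))) (d0 n) = 0 := by
    have hmem := nab_m_c_mem i l m
    rw [t23 _ _ _ (eCov_mem_S hjk) (SpanM_le hmem) d0_mem_S]
    exact stepB _ (eCov_mem_C hjk) _ hmem
  have e3 : gN (K (nabla (eCov j k) (eMean i)) (eCov l m)) (d0 n) = 0 := by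
    have hmem := nab_c_m_mem j k i
    rw [t12 _ _ _ (SpanM_le hmem) (eCov_mem_S hlm) d0_mem_S,
      t23 _ _ _ (eCov_mem_S hlm) (SpanM_le hmem) d0_mem_S]
    exact stepB _ (eCov_mem_C hlm) _ hmem
  have e4 : gN (K (eMean i) (nabla (eCov j k) (eCov l m))) (d0 n) = 0 := by
    have hmem := nab_cc_mem hjk hlm
    rw [t12 _ _ _ (eMean_mem_S i) (SpanC_le hmem) d0_mem_S,
      t23 _ _ _ (SpanC_le hmem) (eMean_mem_S i) d0_mem_S]
    exact stepB _ hmem _ (eMean_mem_M i)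
  simp only [map_neg, _root_.map_smul, map_zero, LinearMap.neg_apply, LinearMap.smul_apply,
    LinearMap.zero_apply, gN_neg_left, gN_neg_right, gN_smul_left, gN_smul_right,
    gN_zero_left, gN_zero_right] at h
  linarith
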